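/- Let A be a discrete valuation ring with uniformizer t and fraction field K, let S be a commutative K-algebra, and let g : A[X₀,…,Xₙ] → S be an A-algebra homomorphism such that S is finitely generated as a module over the image of the induced K-algebra homomorphism K[X₀,…,Xₙ] → S. Then there exists an A-subalgebra R of S containing the image of g such that R is finitely generated as a module over the image subring g(A[X₀,…,Xₙ]) and such that for every s ∈ S there exists k ≥ 0 with tᵏ·s ∈ R. In particular R is torsion-free, hence flat, over A, and S is recovered from R by inverting t. (The existence-of-a-flat-extension step in the proof of Theorem 3.5 of the paper, the properness of the functor of branchvarieties.) -/

import Mathlib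

set_option synthInstance.maxHeartbeats 1000000
set_option maxHeartbeats 1000000

/-- Let `A` be a DVR with uniformizer `t` and fraction field `K`, `S` a commutative
`K`-algebra, and `g : A[X₀,…,Xₙ] → S` an `A`-algebra homomorphism such that `S` is
finite as a module over the image of the induced map `K[X₀,…,Xₙ] → S`.  Then there is
an `A`-subalgebra `R` of `S` containing the image of `g`, finitely generated as a
module over the image of `g`, and such that every `s ∈ S` satisfies `t ^ k • s ∈ R`
for some `k`. -/
theorem exists_flat_extension_over_dvr
    (A : Type*) [CommRing A] [IsDomain A] [IsDiscreteValuationRing A]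
    (t : A) (ht : Irreducible t)
    (S : Type*) [CommRing S] [Algebra (FractionRing A) S]
    [Algebra A S] [IsScalarTower A (FractionRing A) S]
    (n : ℕ) (g : MvPolynomial (Fin (n + 1)) A →ₐ[A] S)
    (hfin : Module.Finite
      ↥(MvPolynomial.aeval (R := FractionRing A)
          (fun i : Fin (n + 1) => g (MvPolynomial.X i))).range S) :
    ∃ R : Subalgebra A S,
      g.range ≤ R ∧
      (∃ s : Finset S, ↑s ⊆ (R : Set S) ∧
        (R : Set S) ⊆ (Submodule.span ↥g.range (↑s : Set S) : Set S)) ∧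
      ∀ x : S, ∃ k : ℕ, algebraMap A S t ^ k * x ∈ R := by
  classical
  set K := FractionRing A with hK
  set G := g.range with hG
  set τ : S := algebraMap A S t with hτ
  -- Step A: clearing denominators in K
  have hA : ∀ x : K, ∃ (m : ℕ) (a : A), algebraMap A K t ^ m * x = algebraMap A K a := by
    intro x
    obtain ⟨b, a0, ha0⟩ := IsLocalization.exists_integer_multiple (nonZeroDivisors A) x
    have hb0 : (b : A) ≠ 0 := nonZeroDivisors.coe_ne_zero b
    obtain ⟨m, u, hu⟩ := IsDiscreteValuationRing.eq_unit_mul_pow_irreducible hb0 ht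
    refine ⟨m, (↑u⁻¹ : A) * a0, ?_⟩
    have key : algebraMap A K ((u : A) * t ^ m) * x = algebraMap A K a0 := by
      rw [← hu, ← Algebra.smul_def]
      exact ha0.symm
    have := congrArg (fun y => algebraMap A K (↑u⁻¹ : A) * y) key
    simp only [← map_mul, ← mul_assoc] at this
    rw [Units.inv_mul, one_mul, map_pow] at this
    exact this
  -- Step B: every element of the K-image has a t-power multiple in G
  have hB : ∀ p : MvPolynomial (Fin (n + 1)) K, ∃ m : ℕ,
      τ ^ m * (MvPolynomial.aeval (R := K) (fun i : Fin (n + 1) => g (MvPolynomial.X i))) p ∈ G := by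
    intro p
    induction p using MvPolynomial.induction_on with
    | C a =>
      obtain ⟨m, a', ha'⟩ := hA a
      refine ⟨m, ?_⟩
      have hτK : τ = algebraMap K S (algebraMap A K t) := by
        rw [hτ, IsScalarTower.algebraMap_apply A K S]
      have : τ ^ m * (MvPolynomial.aeval (R := K)
          (fun i : Fin (n + 1) => g (MvPolynomial.X i))) (MvPolynomial.C a)
          = algebraMap A S a' := by
        rw [MvPolynomial.aeval_C, hτK, ← map_pow, ← map_mul, ha',
          ← IsScalarTower.algebraMap_apply A K S]
      rw [this]
      exact G.algebraMap_mem a'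
    | add p q hp hq =>
      obtain ⟨m1, h1⟩ := hp
      obtain ⟨m2, h2⟩ := hq
      refine ⟨m1 + m2, ?_⟩
      rw [map_add, mul_add]
      have e1 : τ ^ (m1 + m2) * (MvPolynomial.aeval (R := K)
          (fun i : Fin (n + 1) => g (MvPolynomial.X i))) p
          = τ ^ m2 * (τ ^ m1 * (MvPolynomial.aeval (R := K)
          (fun i : Fin (n + 1) => g (MvPolynomial.X i))) p) := by ring
      have e2 : τ ^ (m1 + m2) * (MvPolynomial.aeval (R := K)
          (fun i : Fin (n + 1) => g (MvPolynomial.X i))) q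
          = τ ^ m1 * (τ ^ m2 * (MvPolynomial.aeval (R := K)
          (fun i : Fin (n + 1) => g (MvPolynomial.X i))) q) := by ring
      rw [e1, e2]
      have hτG : τ ∈ G := by rw [hτ]; exact G.algebraMap_mem t
      exact G.add_mem (G.mul_mem (G.pow_mem hτG m2) h1) (G.mul_mem (G.pow_mem hτG m1) h2)
    | mul_X p i hp =>
      obtain ⟨m, hm⟩ := hp
      refine ⟨m, ?_⟩
      rw [map_mul, MvPolynomial.aeval_X, ← mul_assoc]
      exact G.mul_mem hm ⟨MvPolynomial.X i, rfl⟩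
  set B := (MvPolynomial.aeval (R := K) (fun i : Fin (n + 1) => g (MvPolynomial.X i))).range with hBdef
  have hsmul : ∀ (Q : Submodule (↥G) S) (c : S), c ∈ G → ∀ x ∈ Q, c * x ∈ Q := by
    intro Q c hc x hx
    have h := Q.smul_mem ⟨c, hc⟩ hx
    simpa [Subalgebra.smul_def, smul_eq_mul] using h
  have hτG : τ ∈ G := G.algebraMap_mem t
  obtain ⟨Y, hY⟩ := hfin.fg_top
  set P0 := Submodule.span (↥G) (insert (1:S) (↑Y : Set S)) with hP0
  have claim : ∀ x : S, ∃ k : ℕ, τ ^ k * x ∈ P0 := by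
    intro x
    have hx : x ∈ Submodule.span (↥B) (↑Y : Set S) := hY ▸ Submodule.mem_top
    induction hx using Submodule.span_induction with
    | mem y hy => exact ⟨0, by simpa using Submodule.subset_span (Set.mem_insert_of_mem _ hy)⟩
    | zero => exact ⟨0, by simpa using P0.zero_mem⟩
    | add x y hx hy ihx ihy =>
      obtain ⟨k1, h1⟩ := ihx
      obtain ⟨k2, h2⟩ := ihy
      refine ⟨k1 + k2, ?_⟩
      have e : τ ^ (k1+k2) * (x + y) = τ^k2 * (τ^k1 * x) + τ^k1 * (τ^k2 * y) := by
        rw [pow_add]; ring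
      rw [e]
      exact P0.add_mem (hsmul _ _ (G.pow_mem hτG k2) _ h1) (hsmul _ _ (G.pow_mem hτG k1) _ h2)
    | smul c x hx ih =>
      obtain ⟨k, hk⟩ := ih
      obtain ⟨p, hp⟩ := c.2
      obtain ⟨m, hm⟩ := hB p
      have hp' : (MvPolynomial.aeval (R := K) fun i => g (MvPolynomial.X i)) p = (↑c : S) := hp
      rw [hp'] at hm
      refine ⟨m + k, ?_⟩
      have e : τ ^ (m+k) * ((↑c : S) * x) = (τ^m * ↑c) * (τ^k * x) := by rw [pow_add]; ring
      have hc : c • x = (↑c : S) * x := rfl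
      rw [hc, e]
      exact hsmul _ _ hm _ hk
  choose kf hkf using claim
  set M := (Y ×ˢ Y).sup (fun p => kf (p.1 * p.2)) with hM
  set z : Finset S := Y.image (fun y => τ ^ M * y) with hz
  set sf : Finset S := insert (1:S) z with hsf
  set P := Submodule.span (↥G) (↑sf : Set S) with hP
  have h1P : (1:S) ∈ P := Submodule.subset_span (by simp [hsf])
  have hGP : ∀ c ∈ G, c ∈ P := fun c hc => by simpa using hsmul P c hc 1 h1P
  have hP0P : ∀ x ∈ P0, τ ^ M * x ∈ P := by
    intro x hx
    induction hx using Submodule.span_induction with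
    | mem y hy =>
      rcases Set.mem_insert_iff.mp hy with h | h
      · rw [h, mul_one]; exact hGP _ (G.pow_mem hτG M)
      · refine Submodule.subset_span ?_
        rw [hsf]
        push_cast
        refine Set.mem_insert_of_mem _ ?_
        rw [hz]
        exact Finset.mem_coe.mpr (Finset.mem_image.mpr ⟨y, h, rfl⟩)
    | zero => simpa using P.zero_mem
    | add a b ha hb iha ihb => rw [mul_add]; exact P.add_mem iha ihb
    | smul c a ha ih =>
      have e : τ^M * (c • a) = (↑c : S) * (τ^M * a) := by
        have hc : c • a = (↑c : S) * a := rfl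
        rw [hc]; ring
      rw [e]; exact hsmul _ _ c.2 _ ih
  have hmulP : ∀ x ∈ P, ∀ y ∈ P, x * y ∈ P := by
    intro x hx
    induction hx using Submodule.span_induction with
    | mem u hu =>
      intro y hy
      induction hy using Submodule.span_induction with
      | mem v hv =>
        rcases Finset.mem_insert.mp (Finset.mem_coe.mp hu) with h | h
        · rw [h, one_mul]; exact Submodule.subset_span hv
        · rcases Finset.mem_insert.mp (Finset.mem_coe.mp hv) with h' | h'
          · rw [h', mul_one]; exact Submodule.subset_span hu
          · rw [hz] at h h'
            obtain ⟨a, ha, rfl⟩ := Finset.mem_image.mp h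
            obtain ⟨b, hb, rfl⟩ := Finset.mem_image.mp h'
            have hkM : kf (a * b) ≤ M := by
              rw [hM]
              exact Finset.le_sup (f := fun p => kf (p.1 * p.2)) (b := (a, b))
                (Finset.mem_product.mpr ⟨ha, hb⟩)
            have h2 : τ^M * (τ^(kf (a*b)) * (a*b)) ∈ P := hP0P _ (hkf (a*b))
            have h3 : τ^(M - kf (a*b)) * (τ^M * (τ^(kf (a*b)) * (a*b))) ∈ P :=
              hsmul _ _ (G.pow_mem hτG _) _ h2
            have e : (τ^M*a)*(τ^M*b) = τ^(M - kf (a*b)) * (τ^M * (τ^(kf (a*b)) * (a*b))) := by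
              calc (τ^M*a)*(τ^M*b) = τ^(M+M) * (a*b) := by rw [pow_add]; ring
                _ = τ^((M - kf (a*b)) + (M + kf (a*b))) * (a*b) := by congr 2; omega
                _ = τ^(M - kf (a*b)) * (τ^M * (τ^(kf (a*b)) * (a*b))) := by
                    rw [pow_add, pow_add]; ring
            rw [e]
            exact h3
      | zero => simpa using P.zero_mem
      | add a b ha hb iha ihb => rw [mul_add]; exact P.add_mem iha ihb
      | smul c a ha ih =>
        have e : u * (c • a) = (↑c : S) * (u * a) := by
          have hc : c • a = (↑c : S) * a := rfl
          rw [hc]; ring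
        rw [e]; exact hsmul _ _ c.2 _ ih
    | zero => intro y hy; simpa using P.zero_mem
    | add a b ha hb iha ihb => intro y hy; rw [add_mul]; exact P.add_mem (iha y hy) (ihb y hy)
    | smul c a ha ih =>
      intro y hy
      have e : (c • a) * y = (↑c : S) * (a * y) := by
        have hc : c • a = (↑c : S) * a := rfl
        rw [hc]; ring
      rw [e]; exact hsmul _ _ c.2 _ (ih y hy)
  refine ⟨{ carrier := (P : Set S),
            mul_mem' := fun {a b} ha hb => hmulP a ha b hb,
            one_mem' := h1P,
            add_mem' := fun {a b} ha hb => P.add_mem ha hb,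
            zero_mem' := P.zero_mem,
            algebraMap_mem' := fun a => hGP _ (G.algebraMap_mem a) }, ?_, ?_, ?_⟩
  · intro x hx
    exact hGP x hx
  · exact ⟨sf, fun x hx => Submodule.subset_span hx, fun x hx => hx⟩
  · intro x
    refine ⟨kf x + M, ?_⟩
    have e : τ ^ (kf x + M) * x = τ^M * (τ^(kf x) * x) := by rw [pow_add]; ring
    show τ ^ (kf x + M) * x ∈ P
    rw [e]
    exact hP0P _ (hkf x)
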